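/- If a finite nonempty subset W of ℤ² has at least 2 elements and is connected (under lattice adjacency), then its edge boundary has size at least 6. -/

import Mathlib

/-- The edge boundary of a subset of `ℤ²`: pairs `(x, y)` with `x ∈ A`, `y ∉ A`,
adjacent in the grid lattice. -/
def edgeBoundary (A : Set (ℤ × ℤ)) : Set ((ℤ × ℤ) × (ℤ × ℤ)) :=
  {p | p.1 ∈ A ∧ p.2 ∉ A ∧
    p.1 - p.2 ∈ ({(1, 0), (-1, 0), (0, 1), (0, -1)} : Set (ℤ × ℤ))}

lemma edgeBoundary_finite (W : Set (ℤ × ℤ)) (hfin : W.Finite) :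
    (edgeBoundary W).Finite := by
  have hsub : edgeBoundary W ⊆ W ×ˢ
      (⋃ w ∈ W, ({w - (1, 0), w - (-1, 0), w - (0, 1), w - (0, -1)} : Set (ℤ × ℤ))) := by
    rintro ⟨a, b⟩ ⟨ha, hb, hd⟩
    refine ⟨ha, Set.mem_biUnion ha ?_⟩
    have hb' : b = a - (a - b) := by ring
    simp only [Set.mem_insert_iff, Set.mem_singleton_iff] at hd ⊢
    rcases hd with h | h | h | h <;> rw [hb', h] <;> tauto
  exact Set.Finite.subset (hfin.prod (hfin.biUnion fun _ _ => Set.toFinite _)) hsub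

lemma key_rows (W : Set (ℤ × ℤ)) (hfin : W.Finite) {p q : ℤ × ℤ}
    (hp : p ∈ W) (hq : q ∈ W) (hpq : p.2 ≠ q.2) : 6 ≤ (edgeBoundary W).ncard := by
  obtain ⟨a, ha, haM⟩ := Set.Finite.exists_maximalFor Prod.fst {w ∈ W | w.2 = p.2}
    (hfin.subset fun _ h => h.1) ⟨p, hp, rfl⟩
  obtain ⟨b, hb, hbm⟩ := Set.Finite.exists_minimalFor Prod.fst {w ∈ W | w.2 = p.2}
    (hfin.subset fun _ h => h.1) ⟨p, hp, rfl⟩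
  obtain ⟨c, hc, hcM⟩ := Set.Finite.exists_maximalFor Prod.fst {w ∈ W | w.2 = q.2}
    (hfin.subset fun _ h => h.1) ⟨q, hq, rfl⟩
  obtain ⟨d, hd, hdm⟩ := Set.Finite.exists_minimalFor Prod.fst {w ∈ W | w.2 = q.2}
    (hfin.subset fun _ h => h.1) ⟨q, hq, rfl⟩
  obtain ⟨e, he, heM⟩ := Set.Finite.exists_maximalFor Prod.snd {w ∈ W | w.1 = p.1}
    (hfin.subset fun _ h => h.1) ⟨p, hp, rfl⟩
  obtain ⟨f, hf, hfm⟩ := Set.Finite.exists_minimalFor Prod.snd {w ∈ W | w.1 = p.1}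
    (hfin.subset fun _ h => h.1) ⟨p, hp, rfl⟩
  -- memberships
  have haW : (a.1, p.2) ∈ W := by rw [← ha.2]; exact ha.1
  have hbW : (b.1, p.2) ∈ W := by rw [← hb.2]; exact hb.1
  have hcW : (c.1, q.2) ∈ W := by rw [← hc.2]; exact hc.1
  have hdW : (d.1, q.2) ∈ W := by rw [← hd.2]; exact hd.1
  have heW : (p.1, e.2) ∈ W := by rw [← he.2]; exact he.1
  have hfW : (p.1, f.2) ∈ W := by rw [← hf.2]; exact hf.1
  -- non-memberships
  have haN : (a.1 + 1, p.2) ∉ W := fun h => by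
    have := haM (j := (a.1 + 1, p.2)) ⟨h, rfl⟩ (by simp); simp at this
  have hbN : (b.1 - 1, p.2) ∉ W := fun h => by
    have := hbm (j := (b.1 - 1, p.2)) ⟨h, rfl⟩ (by simp); simp at this
  have hcN : (c.1 + 1, q.2) ∉ W := fun h => by
    have := hcM (j := (c.1 + 1, q.2)) ⟨h, rfl⟩ (by simp); simp at this
  have hdN : (d.1 - 1, q.2) ∉ W := fun h => by
    have := hdm (j := (d.1 - 1, q.2)) ⟨h, rfl⟩ (by simp); simp at this
  have heN : (p.1, e.2 + 1) ∉ W := fun h => by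
    have := heM (j := (p.1, e.2 + 1)) ⟨h, rfl⟩ (by simp); simp at this
  have hfN : (p.1, f.2 - 1) ∉ W := fun h => by
    have := hfm (j := (p.1, f.2 - 1)) ⟨h, rfl⟩ (by simp); simp at this
  set e1 : (ℤ × ℤ) × (ℤ × ℤ) := ((a.1, p.2), (a.1 + 1, p.2)) with he1
  set e2 : (ℤ × ℤ) × (ℤ × ℤ) := ((b.1, p.2), (b.1 - 1, p.2)) with he2
  set e3 : (ℤ × ℤ) × (ℤ × ℤ) := ((c.1, q.2), (c.1 + 1, q.2)) with he3
  set e4 : (ℤ × ℤ) × (ℤ × ℤ) := ((d.1, q.2), (d.1 - 1, q.2)) with he4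
  set e5 : (ℤ × ℤ) × (ℤ × ℤ) := ((p.1, e.2), (p.1, e.2 + 1)) with he5
  set e6 : (ℤ × ℤ) × (ℤ × ℤ) := ((p.1, f.2), (p.1, f.2 - 1)) with he6
  have hsub : ({e1, e2, e3, e4, e5, e6} : Set ((ℤ × ℤ) × (ℤ × ℤ))) ⊆ edgeBoundary W := by
    rintro x hx
    simp only [Set.mem_insert_iff, Set.mem_singleton_iff] at hx
    rcases hx with rfl | rfl | rfl | rfl | rfl | rfl <;>
      refine ⟨by assumption, by assumption, ?_⟩ <;>
      simp [he1, he2, he3, he4, he5, he6, Prod.ext_iff]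
  have hcard6 : ({e1, e2, e3, e4, e5, e6} : Set ((ℤ × ℤ) × (ℤ × ℤ))).ncard = 6 := by
    rw [Set.ncard_insert_of_notMem (by
        simp only [Set.mem_insert_iff, Set.mem_singleton_iff, he1, he2, he3, he4, he5, he6,
          Prod.mk.injEq]; omega) (Set.toFinite _),
      Set.ncard_insert_of_notMem (by
        simp only [Set.mem_insert_iff, Set.mem_singleton_iff, he2, he3, he4, he5, he6,
          Prod.mk.injEq]; omega) (Set.toFinite _),
      Set.ncard_insert_of_notMem (by
        simp only [Set.mem_insert_iff, Set.mem_singleton_iff, he3, he4, he5, he6,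
          Prod.mk.injEq]; omega) (Set.toFinite _),
      Set.ncard_insert_of_notMem (by
        simp only [Set.mem_insert_iff, Set.mem_singleton_iff, he4, he5, he6,
          Prod.mk.injEq]; omega) (Set.toFinite _),
      Set.ncard_insert_of_notMem (by
        simp only [Set.mem_singleton_iff, he5, he6, Prod.mk.injEq]; omega) (Set.toFinite _),
      Set.ncard_singleton]
  calc 6 = ({e1, e2, e3, e4, e5, e6} : Set ((ℤ × ℤ) × (ℤ × ℤ))).ncard := hcard6.symm
    _ ≤ (edgeBoundary W).ncard := Set.ncard_le_ncard hsub (edgeBoundary_finite W hfin)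

lemma key_cols (W : Set (ℤ × ℤ)) (hfin : W.Finite) {p q : ℤ × ℤ}
    (hp : p ∈ W) (hq : q ∈ W) (hpq : p.1 ≠ q.1) : 6 ≤ (edgeBoundary W).ncard := by
  obtain ⟨a, ha, haM⟩ := Set.Finite.exists_maximalFor Prod.snd {w ∈ W | w.1 = p.1}
    (hfin.subset fun _ h => h.1) ⟨p, hp, rfl⟩
  obtain ⟨b, hb, hbm⟩ := Set.Finite.exists_minimalFor Prod.snd {w ∈ W | w.1 = p.1}
    (hfin.subset fun _ h => h.1) ⟨p, hp, rfl⟩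
  obtain ⟨c, hc, hcM⟩ := Set.Finite.exists_maximalFor Prod.snd {w ∈ W | w.1 = q.1}
    (hfin.subset fun _ h => h.1) ⟨q, hq, rfl⟩
  obtain ⟨d, hd, hdm⟩ := Set.Finite.exists_minimalFor Prod.snd {w ∈ W | w.1 = q.1}
    (hfin.subset fun _ h => h.1) ⟨q, hq, rfl⟩
  obtain ⟨e, he, heM⟩ := Set.Finite.exists_maximalFor Prod.fst {w ∈ W | w.2 = p.2}
    (hfin.subset fun _ h => h.1) ⟨p, hp, rfl⟩
  obtain ⟨f, hf, hfm⟩ := Set.Finite.exists_minimalFor Prod.fst {w ∈ W | w.2 = p.2}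
    (hfin.subset fun _ h => h.1) ⟨p, hp, rfl⟩
  have haW : (p.1, a.2) ∈ W := by rw [← ha.2]; exact ha.1
  have hbW : (p.1, b.2) ∈ W := by rw [← hb.2]; exact hb.1
  have hcW : (q.1, c.2) ∈ W := by rw [← hc.2]; exact hc.1
  have hdW : (q.1, d.2) ∈ W := by rw [← hd.2]; exact hd.1
  have heW : (e.1, p.2) ∈ W := by rw [← he.2]; exact he.1
  have hfW : (f.1, p.2) ∈ W := by rw [← hf.2]; exact hf.1
  have haN : (p.1, a.2 + 1) ∉ W := fun h => by
    have := haM (j := (p.1, a.2 + 1)) ⟨h, rfl⟩ (by simp); simp at this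
  have hbN : (p.1, b.2 - 1) ∉ W := fun h => by
    have := hbm (j := (p.1, b.2 - 1)) ⟨h, rfl⟩ (by simp); simp at this
  have hcN : (q.1, c.2 + 1) ∉ W := fun h => by
    have := hcM (j := (q.1, c.2 + 1)) ⟨h, rfl⟩ (by simp); simp at this
  have hdN : (q.1, d.2 - 1) ∉ W := fun h => by
    have := hdm (j := (q.1, d.2 - 1)) ⟨h, rfl⟩ (by simp); simp at this
  have heN : (e.1 + 1, p.2) ∉ W := fun h => by
    have := heM (j := (e.1 + 1, p.2)) ⟨h, rfl⟩ (by simp); simp at this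
  have hfN : (f.1 - 1, p.2) ∉ W := fun h => by
    have := hfm (j := (f.1 - 1, p.2)) ⟨h, rfl⟩ (by simp); simp at this
  set e1 : (ℤ × ℤ) × (ℤ × ℤ) := ((p.1, a.2), (p.1, a.2 + 1)) with he1
  set e2 : (ℤ × ℤ) × (ℤ × ℤ) := ((p.1, b.2), (p.1, b.2 - 1)) with he2
  set e3 : (ℤ × ℤ) × (ℤ × ℤ) := ((q.1, c.2), (q.1, c.2 + 1)) with he3
  set e4 : (ℤ × ℤ) × (ℤ × ℤ) := ((q.1, d.2), (q.1, d.2 - 1)) with he4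
  set e5 : (ℤ × ℤ) × (ℤ × ℤ) := ((e.1, p.2), (e.1 + 1, p.2)) with he5
  set e6 : (ℤ × ℤ) × (ℤ × ℤ) := ((f.1, p.2), (f.1 - 1, p.2)) with he6
  have hsub : ({e1, e2, e3, e4, e5, e6} : Set ((ℤ × ℤ) × (ℤ × ℤ))) ⊆ edgeBoundary W := by
    rintro x hx
    simp only [Set.mem_insert_iff, Set.mem_singleton_iff] at hx
    rcases hx with rfl | rfl | rfl | rfl | rfl | rfl <;>
      refine ⟨by assumption, by assumption, ?_⟩ <;>
      simp [he1, he2, he3, he4, he5, he6, Prod.ext_iff]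
  have hcard6 : ({e1, e2, e3, e4, e5, e6} : Set ((ℤ × ℤ) × (ℤ × ℤ))).ncard = 6 := by
    rw [Set.ncard_insert_of_notMem (by
        simp only [Set.mem_insert_iff, Set.mem_singleton_iff, he1, he2, he3, he4, he5, he6,
          Prod.mk.injEq]; omega) (Set.toFinite _),
      Set.ncard_insert_of_notMem (by
        simp only [Set.mem_insert_iff, Set.mem_singleton_iff, he2, he3, he4, he5, he6,
          Prod.mk.injEq]; omega) (Set.toFinite _),
      Set.ncard_insert_of_notMem (by
        simp only [Set.mem_insert_iff, Set.mem_singleton_iff, he3, he4, he5, he6,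
          Prod.mk.injEq]; omega) (Set.toFinite _),
      Set.ncard_insert_of_notMem (by
        simp only [Set.mem_insert_iff, Set.mem_singleton_iff, he4, he5, he6,
          Prod.mk.injEq]; omega) (Set.toFinite _),
      Set.ncard_insert_of_notMem (by
        simp only [Set.mem_singleton_iff, he5, he6, Prod.mk.injEq]; omega) (Set.toFinite _),
      Set.ncard_singleton]
  calc 6 = ({e1, e2, e3, e4, e5, e6} : Set ((ℤ × ℤ) × (ℤ × ℤ))).ncard := hcard6.symm
    _ ≤ (edgeBoundary W).ncard := Set.ncard_le_ncard hsub (edgeBoundary_finite W hfin)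

theorem stmt_10 (W : Set (ℤ × ℤ)) (hfin : W.Finite) (hcard : 2 ≤ W.ncard)
    (hconn : ∀ x ∈ W, ∀ y ∈ W, Relation.ReflTransGen
      (fun a b => a ∈ W ∧ b ∈ W ∧
        a - b ∈ ({(1, 0), (-1, 0), (0, 1), (0, -1)} : Set (ℤ × ℤ))) x y) :
    6 ≤ (edgeBoundary W).ncard := by
  obtain ⟨p, q, hp, hq, hpq⟩ := (Set.one_lt_ncard_iff hfin).mp (by omega)
  rcases eq_or_ne p.1 q.1 with h1 | h1
  · have h2 : p.2 ≠ q.2 := fun h2 => hpq (Prod.ext h1 h2)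
    exact key_rows W hfin hp hq h2
  · exact key_cols W hfin hp hq h1
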